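/- For an integer $1 \le m \le n$ and a vector $\lambda \in \mathbb{R}^n$ lying in the Gårding cone $\Gamma_m$ (i.e. $\sigma_k(\lambda) > 0$ for all $1 \le k \le m$), Maclaurin's inequality holds: $\left(\binom{n}{m}^{-1}\sigma_m(\lambda)\right)^{1/m} \le \frac{1}{n}\sigma_1(\lambda)$, where $\sigma_k$ denotes the $k$-th elementary symmetric polynomial. -/

import Mathlib

open Finset
open Polynomial

/-- The `k`-th elementary symmetric polynomial of `lam : Fin n → ℝ`. -/
noncomputable def esymmR (n k : ℕ) (lam : Fin n → ℝ) : ℝ :=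
  ∑ s ∈ Finset.powersetCard k (Finset.univ : Finset (Fin n)), ∏ i ∈ s, lam i


lemma exists_fn (n : ℕ) (s : Multiset ℝ) (h : Multiset.card s = n) :
    ∃ f : Fin n → ℝ, s = (Finset.univ : Finset (Fin n)).val.map f := by
  have hl : s.toList.length = n := by rw [Multiset.length_toList, h]
  clear h
  subst hl
  refine ⟨s.toList.get, ?_⟩
  conv_lhs => rw [← Multiset.coe_toList s, ← List.ofFn_get s.toList]
  rw [List.ofFn_eq_map]
  rfl

lemma esymmR_compl (n j : ℕ) (hj : j ≤ n) (lam : Fin n → ℝ) :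
    esymmR n (n - j) lam
      = ∑ u ∈ Finset.powersetCard j (Finset.univ : Finset (Fin n)), ∏ i ∈ uᶜ, lam i := by
  unfold esymmR
  refine Finset.sum_nbij' (fun t => tᶜ) (fun u => uᶜ) ?_ ?_ ?_ ?_ ?_
  · intro a ha
    rw [Finset.mem_powersetCard_univ] at ha ⊢
    rw [Finset.card_compl, ha, Fintype.card_fin]
    omega
  · intro a ha
    rw [Finset.mem_powersetCard_univ] at ha ⊢
    rw [Finset.card_compl, ha, Fintype.card_fin]
  · intro a _; exact compl_compl a
  · intro a _; exact compl_compl a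
  · intro a _; rw [compl_compl]

lemma esymmR_top (n : ℕ) (lam : Fin n → ℝ) : esymmR n n lam = ∏ i, lam i := by
  unfold esymmR
  have h : Finset.powersetCard n (Finset.univ : Finset (Fin n)) = {Finset.univ} := by
    have := Finset.powersetCard_self (Finset.univ : Finset (Fin n))
    rwa [Finset.card_univ, Fintype.card_fin] at this
  rw [h, Finset.sum_singleton]

lemma esymmR_top_sub_one (n : ℕ) (hn : 1 ≤ n) (lam : Fin n → ℝ) :
    esymmR n (n - 1) lam = ∑ i, ∏ j ∈ ({i}ᶜ : Finset (Fin n)), lam j := by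
  rw [esymmR_compl n 1 hn, Finset.powersetCard_one, Finset.sum_map]
  rfl

lemma pair_filter_offDiag (n : ℕ) (a b : Fin n) (hab : a ≠ b) :
    Finset.filter (fun p : Fin n × Fin n => ({p.1, p.2} : Finset (Fin n)) = {a, b})
      (Finset.univ.offDiag) = {(a, b), (b, a)} := by
  ext ⟨x, y⟩
  simp only [Finset.mem_filter, Finset.mem_offDiag, Finset.mem_univ, true_and,
    Finset.mem_insert, Finset.mem_singleton, Prod.mk.injEq]
  constructor
  · rintro ⟨hxy, h⟩
    have hx : x ∈ ({a, b} : Finset (Fin n)) := by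
      rw [← h]; simp
    have hy : y ∈ ({a, b} : Finset (Fin n)) := by
      rw [← h]; simp
    simp only [Finset.mem_insert, Finset.mem_singleton] at hx hy
    rcases hx with rfl | rfl <;> rcases hy with rfl | rfl
    · exact absurd rfl hxy
    · left; exact ⟨rfl, rfl⟩
    · right; exact ⟨rfl, rfl⟩
    · exact absurd rfl hxy
  · rintro (⟨rfl, rfl⟩ | ⟨rfl, rfl⟩)
    · exact ⟨hab, rfl⟩
    · exact ⟨hab.symm, by rw [Finset.pair_comm]⟩

lemma prod_compl_pair (n : ℕ) (lam : Fin n → ℝ) (a b : Fin n) (hab : a ≠ b) :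
    (∏ j ∈ ({a}ᶜ : Finset (Fin n)), lam j) * ∏ j ∈ ({b}ᶜ : Finset (Fin n)), lam j
      = (∏ i ∈ (({a, b} : Finset (Fin n))ᶜ), lam i) * ∏ i, lam i := by
  have h1 : ({a}ᶜ : Finset (Fin n)) = insert b (({a, b} : Finset (Fin n))ᶜ) := by
    ext x
    simp only [Finset.mem_compl, Finset.mem_singleton, Finset.mem_insert, Finset.mem_compl,
      Finset.mem_insert, Finset.mem_singleton]
    constructor
    · intro hx
      by_cases hxb : x = b
      · left; exact hxb
      · right; intro hc; rcases hc with rfl | rfl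
        · exact hx rfl
        · exact hxb rfl
    · rintro (rfl | h)
      · exact hab.symm
      · exact fun hxa => h (Or.inl hxa)
  have h2 : ({b}ᶜ : Finset (Fin n)) = insert a (({a, b} : Finset (Fin n))ᶜ) := by
    ext x
    simp only [Finset.mem_compl, Finset.mem_singleton, Finset.mem_insert]
    constructor
    · intro hx
      by_cases hxa : x = a
      · left; exact hxa
      · right; intro hc; rcases hc with rfl | rfl
        · exact hxa rfl
        · exact hx rfl
    · rintro (rfl | h)
      · exact hab
      · exact fun hxb => h (Or.inr hxb)
  have hb : b ∉ (({a, b} : Finset (Fin n))ᶜ) := by simp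
  have ha : a ∉ (({a, b} : Finset (Fin n))ᶜ) := by simp
  rw [h1, h2, Finset.prod_insert hb, Finset.prod_insert ha]
  rw [← Finset.prod_compl_mul_prod ({a, b} : Finset (Fin n)) lam, Finset.prod_pair hab]
  ring

lemma base_ineq (n : ℕ) (hn : 2 ≤ n) (lam : Fin n → ℝ) :
    2 * (n : ℝ) * (esymmR n (n - 2) lam * esymmR n n lam)
      ≤ ((n : ℝ) - 1) * esymmR n (n - 1) lam ^ 2 := by
  set P : Fin n → ℝ := fun i => ∏ j ∈ ({i}ᶜ : Finset (Fin n)), lam j with hP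
  have hS : esymmR n (n - 1) lam = ∑ i, P i := esymmR_top_sub_one n (by omega) lam
  -- off-diagonal sum equals twice the product of esymm's
  have hoff : ∑ p ∈ (Finset.univ : Finset (Fin n)).offDiag, P p.1 * P p.2
      = 2 * (esymmR n (n - 2) lam * esymmR n n lam) := by
    have hmaps : ∀ p ∈ (Finset.univ : Finset (Fin n)).offDiag,
        ({p.1, p.2} : Finset (Fin n)) ∈ Finset.powersetCard 2 (Finset.univ : Finset (Fin n)) := by
      rintro ⟨x, y⟩ hp
      rw [Finset.mem_offDiag] at hp
      rw [Finset.mem_powersetCard_univ]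
      exact Finset.card_pair hp.2.2
    rw [← Finset.sum_fiberwise_of_maps_to hmaps (fun p => P p.1 * P p.2)]
    rw [esymmR_compl n 2 hn, esymmR_top, Finset.sum_mul, Finset.mul_sum]
    refine Finset.sum_congr rfl ?_
    intro u hu
    rw [Finset.mem_powersetCard_univ] at hu
    obtain ⟨a, b, hab, rfl⟩ := Finset.card_eq_two.mp hu
    rw [pair_filter_offDiag n a b hab]
    have hne : ((a, b) : Fin n × Fin n) ≠ (b, a) :=
      fun h => hab (Prod.mk.inj h).1
    rw [Finset.sum_pair hne]
    have h2 : P a * P b = (∏ i ∈ (({a, b} : Finset (Fin n))ᶜ), lam i) * ∏ i, lam i :=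
      prod_compl_pair n lam a b hab
    have h3 : P b * P a = (∏ i ∈ (({a, b} : Finset (Fin n))ᶜ), lam i) * ∏ i, lam i := by
      rw [mul_comm]; exact h2
    rw [h2, h3]; ring
  have hdiag : ∑ p ∈ (Finset.univ : Finset (Fin n)).diag, P p.1 * P p.2 = ∑ i, P i ^ 2 := by
    refine Finset.sum_nbij' (fun p => p.1) (fun i => (i, i)) ?_ ?_ ?_ ?_ ?_
    · intro p _; exact Finset.mem_univ _
    · intro i _; rw [Finset.mem_diag]; exact ⟨Finset.mem_univ _, rfl⟩
    · intro p hp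
      rw [Finset.mem_diag] at hp
      exact Prod.ext rfl hp.2
    · intro i _; rfl
    · intro p hp
      rw [Finset.mem_diag] at hp
      rw [← hp.2, sq]
  have hsplit : (∑ i, P i) ^ 2
      = ∑ i, P i ^ 2 + ∑ p ∈ (Finset.univ : Finset (Fin n)).offDiag, P p.1 * P p.2 := by
    have h1 : (∑ i, P i) ^ 2
        = ∑ p ∈ (Finset.univ : Finset (Fin n)) ×ˢ (Finset.univ : Finset (Fin n)),
            P p.1 * P p.2 := by
      rw [sq, Finset.sum_mul_sum, Finset.sum_product]
    rw [h1, ← Finset.diag_union_offDiag (Finset.univ : Finset (Fin n)),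
      Finset.sum_union (Finset.disjoint_diag_offDiag _), hdiag]
  have hcs : (∑ i, P i) ^ 2 ≤ (n : ℝ) * ∑ i, P i ^ 2 := by
    have := sq_sum_le_card_mul_sum_sq (s := (Finset.univ : Finset (Fin n))) (f := P)
    simpa using this
  rw [hS]
  nlinarith [hoff, hsplit, hcs]

lemma deriv_step (s : Multiset ℝ) (hn : 1 ≤ Multiset.card s) :
    ∃ t : Multiset ℝ, Multiset.card t = Multiset.card s - 1 ∧
      ∀ k, k ≤ Multiset.card s - 1 →
        (Multiset.card s : ℝ) * t.esymm k
          = ((Multiset.card s - k : ℕ) : ℝ) * s.esymm k := by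
  set n := Multiset.card s with hns
  set f := (s.map fun a => X - C a).prod with hf
  have hmon : f.Monic := monic_multiset_prod_of_monic _ _ fun a _ => monic_X_sub_C a
  have hdeg : f.natDegree = n := by
    rw [hf, natDegree_multiset_prod_X_sub_C_eq_card]
  have hroots : f.roots = s := roots_multiset_prod_X_sub_C s
  have hcard1 : n ≤ Multiset.card (derivative f).roots + 1 := by
    have := Polynomial.card_roots_le_derivative f
    rwa [hroots] at this
  have hle : Multiset.card (derivative f).roots ≤ (derivative f).natDegree :=
    Polynomial.card_roots' _
  have hdle : (derivative f).natDegree ≤ n - 1 := by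
    have := Polynomial.natDegree_derivative_le f
    omega
  have hdegeq : (derivative f).natDegree = n - 1 := by omega
  have hcardeq : Multiset.card (derivative f).roots = (derivative f).natDegree := by omega
  have hlead : (derivative f).leadingCoeff = (n : ℝ) := by
    rw [Polynomial.leadingCoeff, hdegeq]
    rw [Polynomial.coeff_derivative]
    have h1 : n - 1 + 1 = n := by omega
    rw [h1]
    rw [← hdeg, hmon.coeff_natDegree, one_mul]
    rw [hdeg]
    exact_mod_cast congrArg (Nat.cast : ℕ → ℝ) h1
  refine ⟨(derivative f).roots, by omega, ?_⟩
  intro k hk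
  have h1 : coeff (derivative f) (n - 1 - k)
      = (derivative f).leadingCoeff * (-1) ^ ((derivative f).natDegree - (n - 1 - k))
        * (derivative f).roots.esymm ((derivative f).natDegree - (n - 1 - k)) :=
    Polynomial.coeff_eq_esymm_roots_of_card hcardeq (by omega)
  rw [hdegeq, hlead] at h1
  have e1 : n - 1 - (n - 1 - k) = k := by omega
  rw [e1] at h1
  have h2 : coeff (derivative f) (n - 1 - k) = coeff f (n - 1 - k + 1) * ((n - 1 - k : ℕ) + 1) :=
    Polynomial.coeff_derivative f (n - 1 - k)
  have e2 : n - 1 - k + 1 = n - k := by omega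
  rw [e2] at h2
  have h3 : coeff f (n - k) = (-1) ^ (Multiset.card s - (n - k))
      * s.esymm (Multiset.card s - (n - k)) := by
    rw [hf]
    exact Multiset.prod_X_sub_C_coeff s (by omega)
  have e3 : Multiset.card s - (n - k) = k := by omega
  rw [e3] at h3
  rw [h3] at h2
  rw [h2] at h1
  have hpow : ((-1 : ℝ)) ^ k ≠ 0 := pow_ne_zero _ (by norm_num)
  have e4 : ((n - 1 - k : ℕ) : ℝ) + 1 = ((n - k : ℕ) : ℝ) :=
    mod_cast congrArg (Nat.cast : ℕ → ℝ) e2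
  rw [e4] at h1
  apply mul_left_cancel₀ hpow
  linear_combination -h1

/-- Normalized elementary symmetric mean of a multiset. -/
noncomputable def EM (s : Multiset ℝ) (k : ℕ) : ℝ :=
  s.esymm k / ((Multiset.card s).choose k)

lemma esymmR_eq_esymm (n k : ℕ) (lam : Fin n → ℝ) :
    esymmR n k lam = ((Finset.univ : Finset (Fin n)).val.map lam).esymm k := by
  rw [Finset.esymm_map_val]; rfl

lemma card_univ_map (n : ℕ) (lam : Fin n → ℝ) :
    Multiset.card ((Finset.univ : Finset (Fin n)).val.map lam) = n := by
  simp

lemma choose_id (n j : ℕ) (hn : 1 ≤ n) (hj : j ≤ n - 1) :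
    n * (n - 1).choose j = (n - j) * n.choose j := by
  have h1 : (n - 1) + 1 = n := by omega
  have h2 := Nat.add_one_mul_choose_eq (n - 1) j
  have h3 := Nat.choose_succ_right_eq n j
  rw [h1] at h2
  rw [h2, h3, Nat.mul_comm]

lemma EM_deriv (n : ℕ) (hn : 1 ≤ n) (s t : Multiset ℝ)
    (hs : Multiset.card s = n) (ht : Multiset.card t = n - 1)
    (hrel : ∀ k, k ≤ n - 1 → (n : ℝ) * t.esymm k = ((n - k : ℕ) : ℝ) * s.esymm k) :
    ∀ j, j ≤ n - 1 → EM t j = EM s j := by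
  intro j hj
  have hc1 : (0 : ℝ) < ((n - 1).choose j : ℝ) := by
    exact_mod_cast Nat.choose_pos hj
  have hc2 : (0 : ℝ) < (n.choose j : ℝ) := by
    exact_mod_cast Nat.choose_pos (by omega : j ≤ n)
  have hn0 : (n : ℝ) ≠ 0 := by positivity
  rw [EM, EM, hs, ht, div_eq_div_iff (ne_of_gt hc1) (ne_of_gt hc2)]
  apply mul_left_cancel₀ hn0
  have hcast : (n : ℝ) * ((n - 1).choose j : ℝ) = ((n - j : ℕ) : ℝ) * (n.choose j : ℝ) := by
    exact_mod_cast congrArg (Nat.cast : ℕ → ℝ) (choose_id n j hn hj)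
  linear_combination ((n.choose j : ℝ)) * hrel j hj - s.esymm j * hcast

theorem newton_ineq : ∀ (n : ℕ) (s : Multiset ℝ), Multiset.card s = n → ∀ k, k + 2 ≤ n →
    EM s k * EM s (k + 2) ≤ EM s (k + 1) ^ 2 := by
  intro n
  induction n with
  | zero => intro s _ k hk; omega
  | succ n ih =>
    intro s hs k hk
    rcases eq_or_lt_of_le hk with heq | hlt
    · -- base case : k + 2 = n + 1
      obtain rfl : n = k + 1 := by omega
      obtain ⟨lam, rfl⟩ := exists_fn (k + 1 + 1) s hs
      have hEM : ∀ j, EM ((Finset.univ : Finset (Fin (k + 1 + 1))).val.map lam) j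
          = esymmR (k + 1 + 1) j lam / ((k + 1 + 1).choose j : ℝ) := by
        intro j
        rw [EM, card_univ_map, esymmR_eq_esymm]
      have hbase := base_ineq (k + 1 + 1) (by omega) lam
      have e1 : k + 1 + 1 - 2 = k := by omega
      have e2 : k + 1 + 1 - 1 = k + 1 := by omega
      rw [e1, e2] at hbase
      have etop : esymmR (k + 1 + 1) (k + 1 + 1) lam = esymmR (k + 1 + 1) (k + 2) lam :=
        congrArg (fun j => esymmR (k + 1 + 1) j lam) rfl
      rw [etop] at hbase
      rw [hEM, hEM, hEM]
      have hc2 : (k + 1 + 1).choose (k + 2) = 1 := Nat.choose_self _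
      have hc1 : (k + 1 + 1).choose (k + 1) = k + 2 := Nat.choose_succ_self_right _
      have hc0 : 2 * ((k + 1 + 1).choose k) = (k + 2) * (k + 1) := by
        have h3 := Nat.choose_succ_right_eq (k + 2) k
        have h4 : k + 2 - k = 2 := by omega
        rw [h4, Nat.choose_succ_self_right] at h3
        have h6 : (k + 1 + 1).choose k = (k + 2).choose k := rfl
        rw [h6, h3, Nat.mul_comm]
      rw [hc2, hc1]
      have hcpos : (0 : ℝ) < ((k + 1 + 1).choose k : ℝ) := by
        exact_mod_cast Nat.choose_pos (by omega : k ≤ k + 1 + 1)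
      rw [div_mul_div_comm, div_pow, div_le_div_iff₀ (by positivity) (by positivity)]
      have hc0' : 2 * (((k + 1 + 1).choose k : ℕ) : ℝ) = ((k : ℝ) + 2) * ((k : ℝ) + 1) := by
        exact_mod_cast congrArg (Nat.cast : ℕ → ℝ) hc0
      have h5 := mul_le_mul_of_nonneg_left hbase (show (0 : ℝ) ≤ ((k : ℝ) + 2) / 2 by positivity)
      push_cast at h5 ⊢
      nlinarith [h5, hc0']
    · -- inductive step
      obtain ⟨t, ht, hrel⟩ := deriv_step s (by omega)
      rw [hs] at ht hrel
      have e1 : n + 1 - 1 = n := by omega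
      rw [e1] at ht hrel
      have hEMd := EM_deriv (n + 1) (by omega) s t hs (by omega)
        (by intro j hj; rw [e1] at hj; exact hrel j hj)
      have h := ih t ht k (by omega)
      rw [hEMd k (by omega), hEMd (k + 1) (by omega), hEMd (k + 2) (by omega)] at h
      exact h

lemma newton_esymmR (n k : ℕ) (hk : k + 2 ≤ n) (lam : Fin n → ℝ) :
    (esymmR n k lam / (n.choose k : ℝ)) * (esymmR n (k + 2) lam / (n.choose (k + 2) : ℝ))
      ≤ (esymmR n (k + 1) lam / (n.choose (k + 1) : ℝ)) ^ 2 := by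
  have h := newton_ineq n ((Finset.univ : Finset (Fin n)).val.map lam) (card_univ_map n lam) k hk
  have hEM : ∀ j, EM ((Finset.univ : Finset (Fin n)).val.map lam) j
      = esymmR n j lam / ((n).choose j : ℝ) := by
    intro j
    rw [EM, card_univ_map, esymmR_eq_esymm]
  rwa [hEM, hEM, hEM] at h

lemma esymmR_zero (n : ℕ) (lam : Fin n → ℝ) : esymmR n 0 lam = 1 := by
  simp [esymmR]

/-- Maclaurin's inequality on the Gårding cone `Γ_m`. -/
theorem maclaurin_inequality (n m : ℕ) (hm : 1 ≤ m) (hmn : m ≤ n)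
    (lam : Fin n → ℝ)
    (hGamma : ∀ k, 1 ≤ k → k ≤ m → 0 < esymmR n k lam) :
    ((n.choose m : ℝ)⁻¹ * esymmR n m lam) ^ ((1 : ℝ) / m) ≤
      (1 / n) * esymmR n 1 lam := by
  set p : ℕ → ℝ := fun k => esymmR n k lam / (n.choose k : ℝ) with hp
  have hchoose : ∀ k, k ≤ n → (0 : ℝ) < (n.choose k : ℝ) := by
    intro k hk; exact_mod_cast Nat.choose_pos hk
  have hnewton : ∀ k, k + 2 ≤ n → p k * p (k + 2) ≤ p (k + 1) ^ 2 := by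
    intro k hk; exact newton_esymmR n k hk lam
  have hp0 : p 0 = 1 := by
    simp [hp, esymmR_zero]
  have hppos : ∀ k, 1 ≤ k → k ≤ m → 0 < p k := by
    intro k h1 h2
    exact div_pos (hGamma k h1 h2) (hchoose k (le_trans h2 hmn))
  have hppos' : ∀ k, k ≤ m → 0 < p k := by
    intro k hk
    rcases Nat.eq_zero_or_pos k with rfl | h1
    · rw [hp0]; exact one_pos
    · exact hppos k h1 hk
  have hQ : ∀ k, k + 1 ≤ m → p (k + 1) ^ k ≤ p k ^ (k + 1) := by
    intro k
    induction k with
    | zero => intro _; simp [hp0]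
    | succ k ih =>
      intro h
      have hN := hnewton k (by omega)
      have hpk : 0 < p k := hppos' k (by omega)
      have hpk1 : 0 < p (k + 1) := hppos' (k + 1) (by omega)
      have hpk2 : 0 < p (k + 2) := hppos' (k + 2) (by omega)
      have h1 : (p (k + 2) * p k) ^ (k + 1) ≤ (p (k + 1) ^ 2) ^ (k + 1) := by
        apply pow_le_pow_left₀ (by positivity)
        nlinarith [hN]
      have h3 : p (k + 1) ^ k ≤ p k ^ (k + 1) := ih (by omega)
      have h4 : p (k + 2) ^ (k + 1) * p k ^ (k + 1)
          ≤ p (k + 1) ^ (k + 2) * p k ^ (k + 1) := by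
        calc p (k + 2) ^ (k + 1) * p k ^ (k + 1) = (p (k + 2) * p k) ^ (k + 1) := by ring
          _ ≤ (p (k + 1) ^ 2) ^ (k + 1) := h1
          _ = p (k + 1) ^ (k + 2) * p (k + 1) ^ k := by ring
          _ ≤ p (k + 1) ^ (k + 2) * p k ^ (k + 1) := by
              exact mul_le_mul_of_nonneg_left h3 (by positivity)
      exact le_of_mul_le_mul_right h4 (by positivity)
  have hR : ∀ k, 1 ≤ k → k ≤ m → p k ≤ p 1 ^ k := by
    intro k
    induction k with
    | zero => omega
    | succ k ih =>
      intro _ h2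
      rcases Nat.eq_zero_or_pos k with rfl | hk1
      · simp
      · have hik := ih hk1 (by omega)
        have hq := hQ k h2
        have h5 : p (k + 1) ^ k ≤ (p 1 ^ (k + 1)) ^ k := by
          calc p (k + 1) ^ k ≤ p k ^ (k + 1) := hq
            _ ≤ (p 1 ^ k) ^ (k + 1) :=
                pow_le_pow_left₀ (hppos' k (by omega)).le hik _
            _ = (p 1 ^ (k + 1)) ^ k := by ring
        exact (pow_le_pow_iff_left₀ (a := p (k + 1)) (b := p 1 ^ (k + 1))
          (hppos' (k + 1) h2).le
          (pow_nonneg (hppos' 1 (by omega)).le _) (by omega : k ≠ 0)).mp h5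
  have hlhs : (n.choose m : ℝ)⁻¹ * esymmR n m lam = p m := (div_eq_inv_mul _ _).symm
  have hrhs : (1 / (n : ℝ)) * esymmR n 1 lam = p 1 := by
    have h1 : p 1 = esymmR n 1 lam / ((n.choose 1 : ℕ) : ℝ) := rfl
    rw [h1, Nat.choose_one_right, one_div, div_eq_inv_mul]
  rw [hlhs, hrhs]
  have hpm : 0 < p m := hppos m hm le_rfl
  have hp1 : 0 < p 1 := hppos 1 le_rfl hm
  have key : p m ≤ p 1 ^ m := hR m hm le_rfl
  have hm0 : (m : ℝ) ≠ 0 := Nat.cast_ne_zero.mpr (by omega)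
  calc (p m) ^ ((1 : ℝ) / m) ≤ (p 1 ^ m) ^ ((1 : ℝ) / m) :=
        Real.rpow_le_rpow hpm.le key (by positivity)
    _ = p 1 := by
        rw [← Real.rpow_natCast (p 1) m, ← Real.rpow_mul hp1.le]
        rw [mul_one_div, div_self hm0, Real.rpow_one]
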